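/- Let X be a first-countable T0 space, Y an ω-well-filtered T0 space, and f : X → Y continuous. Then for every irreducible subset A of X and every countable subset {a_n : n ∈ ℕ} of the closure of A, the set ⋂_{n∈ℕ} ↑f(a_n) ∩ cl(f(A)) is nonempty (where ↑ is taken in the specialization order of Y). -/
import Mathlib


/-- A set is saturated if it is the intersection of all open sets containing it. -/
def IsSaturatedSet {X : Type*} [TopologicalSpace X] (A : Set X) : Prop :=
  A = ⋂₀ {U : Set X | IsOpen U ∧ A ⊆ U}

/-- `X` is ω-well-filtered. -/
def OmegaWellFiltered (X : Type*) [TopologicalSpace X] : Prop :=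
  ∀ K : ℕ → Set X, (∀ n, (K n).Nonempty ∧ IsCompact (K n) ∧ IsSaturatedSet (K n)) →
    (∀ n, K (n + 1) ⊆ K n) → ∀ U : Set X, IsOpen U → (⋂ n, K n) ⊆ U → ∃ n, K n ⊆ U

private lemma stmt18_key {Y : Type*} [TopologicalSpace Y] {z w : Y} {U : Set Y}
    (h : w ∈ closure {z}) (hU : IsOpen U) (hw : w ∈ U) : z ∈ U := by
  by_contra hz
  have hsub : closure {z} ⊆ Uᶜ :=
    closure_minimal (Set.singleton_subset_iff.mpr hz) hU.isClosed_compl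
  exact (hsub h) hw

private noncomputable def stmt18_buildSeq {Q : Type*} (q0 : Q)
    (pick : (ℕ → Q) → ℕ → Q) : ℕ → ℕ → Q
  | 0 => fun _ => q0
  | m + 1 =>
      Function.update (stmt18_buildSeq q0 pick m) m (pick (stmt18_buildSeq q0 pick m) m)

private lemma stmt18_buildSeq_succ {Q : Type*} (q0 : Q) (pick : (ℕ → Q) → ℕ → Q) (m : ℕ) :
    stmt18_buildSeq q0 pick (m + 1) =
      Function.update (stmt18_buildSeq q0 pick m) m (pick (stmt18_buildSeq q0 pick m) m) := by
  rfl

private lemma stmt18_buildSeq_stable {Q : Type*} (q0 : Q) (pick : (ℕ → Q) → ℕ → Q) :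
    ∀ m k, k < m → stmt18_buildSeq q0 pick m k = stmt18_buildSeq q0 pick (k + 1) k := by
  intro m
  induction m with
  | zero => intro k hk; exact absurd hk (Nat.not_lt_zero k)
  | succ m ih =>
    intro k hk
    rcases Nat.lt_succ_iff_lt_or_eq.mp hk with h | h
    · rw [stmt18_buildSeq_succ, Function.update_of_ne (by omega)]
      exact ih k h
    · subst h; rfl

/-- For a continuous map `f` from a first-countable T0 space to an ω-well-filtered T0
space, an irreducible `A ⊆ X`, and a sequence `aₙ` in the closure of `A`, the set
`⋂ₙ ↑f(aₙ) ∩ cl(f(A))` is nonempty (where `↑y = {z : y ≤ z}` in the specialization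
order of `Y`, i.e. `y ∈ closure {z}`). -/
theorem stmt18 {X Y : Type*} [TopologicalSpace X] [T0Space X] [FirstCountableTopology X]
    [TopologicalSpace Y] [T0Space Y] (hY : OmegaWellFiltered Y)
    (f : X → Y) (hf : Continuous f) (A : Set X) (hA : IsIrreducible A)
    (a : ℕ → X) (ha : ∀ n, a n ∈ closure A) :
    ((⋂ n, {z : Y | f (a n) ∈ closure {z}}) ∩ closure (f '' A)).Nonempty := by
  classical
  obtain ⟨⟨a0, ha0⟩, hApre⟩ := hA
  -- countable antitone open neighborhood bases at every point of `X`
  have hbase : ∀ p : X, ∃ V : ℕ → Set X, (∀ j, IsOpen (V j)) ∧ (∀ j, p ∈ V j) ∧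
      (∀ j k, j ≤ k → V k ⊆ V j) ∧ ∀ W, IsOpen W → p ∈ W → ∃ j, V j ⊆ W := by
    intro p
    obtain ⟨s, hs⟩ := (nhds p).exists_antitone_basis
    refine ⟨fun j => interior (s j), fun j => isOpen_interior, fun j => ?_, ?_, ?_⟩
    · exact mem_interior_iff_mem_nhds.mpr (hs.1.mem_of_mem trivial)
    · intro j k hjk
      exact interior_mono (hs.2 hjk)
    · intro W hW hpW
      obtain ⟨j, -, hj⟩ := hs.1.mem_iff.mp (hW.mem_nhds hpW)
      exact ⟨j, interior_subset.trans hj⟩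
  choose V hVopen hVmem hVanti hVbasis using hbase
  -- each basic neighborhood of each `a n` meets `A`
  have hVA : ∀ n m : ℕ, (A ∩ V (a n) m).Nonempty := by
    intro n m
    obtain ⟨w, hw1, hw2⟩ := mem_closure_iff.mp (ha n) (V (a n) m) (hVopen _ m) (hVmem _ m)
    exact ⟨w, hw2, hw1⟩
  -- finite intersections of open sets meeting `A` meet `A` (irreducibility)
  have hfin : ∀ (s : Finset X) (m : ℕ), (∀ p ∈ s, (A ∩ V p m).Nonempty) →
      (A ∩ ⋂ p ∈ s, V p m).Nonempty := by
    intro s m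
    induction s using Finset.induction_on with
    | empty => intro _; simpa using ⟨a0, ha0⟩
    | @insert q s hq ih =>
      intro hs
      have h1 := ih fun p hp => hs p (Finset.mem_insert_of_mem hp)
      have h2 := hs q (Finset.mem_insert_self q s)
      have h3 := hApre (V q m) (⋂ p ∈ s, V p m) (hVopen q m)
        (isOpen_biInter_finset fun p _ => hVopen p m) h2 h1
      rw [Finset.set_biInter_insert]
      exact h3
  -- the recursive choice of the diagonal sequence
  have hTne : ∀ (g : ℕ → {p : X // p ∈ A}) (m : ℕ),
      (A ∩ ⋂ p ∈ (Finset.image a (Finset.range (m + 1)) ∪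
        Finset.image (fun l => (g l : X)) (Finset.range m)), V p m).Nonempty := by
    intro g m
    apply hfin
    intro p hp
    rcases Finset.mem_union.mp hp with h | h
    · obtain ⟨n, -, rfl⟩ := Finset.mem_image.mp h
      exact hVA n m
    · obtain ⟨l, -, rfl⟩ := Finset.mem_image.mp h
      exact ⟨g l, (g l).2, hVmem _ m⟩
  let pick : (ℕ → {p : X // p ∈ A}) → ℕ → {p : X // p ∈ A} :=
    fun g m => ⟨(hTne g m).choose, (hTne g m).choose_spec.1⟩
  let q0 : {p : X // p ∈ A} := ⟨a0, ha0⟩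
  let xx : ℕ → X := fun m => (stmt18_buildSeq q0 pick (m + 1) m).val
  have hx_spec : ∀ m, xx m ∈ A ∩ ⋂ p ∈ (Finset.image a (Finset.range (m + 1)) ∪
      Finset.image (fun l => (stmt18_buildSeq q0 pick m l).val) (Finset.range m)), V p m := by
    intro m
    have h1 : stmt18_buildSeq q0 pick (m + 1) m = pick (stmt18_buildSeq q0 pick m) m := by
      rw [stmt18_buildSeq_succ, Function.update_self]
    show (stmt18_buildSeq q0 pick (m + 1) m).val ∈ _
    rw [h1]
    exact (hTne (stmt18_buildSeq q0 pick m) m).choose_spec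
  have hxA : ∀ m, xx m ∈ A := fun m => (hx_spec m).1
  have hxa : ∀ m n : ℕ, n ≤ m → xx m ∈ V (a n) m := by
    intro m n hnm
    have h2 := Set.mem_iInter₂.mp (hx_spec m).2
    exact h2 (a n) (Finset.mem_union_left _
      (Finset.mem_image_of_mem a (Finset.mem_range.mpr (Nat.lt_succ_of_le hnm))))
  have hxxV : ∀ m l : ℕ, l < m → xx m ∈ V (xx l) m := by
    intro m l hlm
    have h2 := Set.mem_iInter₂.mp (hx_spec m).2
    have h3 : (stmt18_buildSeq q0 pick m l).val = xx l :=
      congrArg Subtype.val (stmt18_buildSeq_stable q0 pick m l hlm)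
    have h4 := h2 (stmt18_buildSeq q0 pick m l).val (Finset.mem_union_right _
      (Finset.mem_image_of_mem _ (Finset.mem_range.mpr hlm)))
    rwa [h3] at h4
  -- the decreasing sequence of compact saturated sets in `Y`
  let K : ℕ → Set Y := fun m => {z : Y | ∃ k, m ≤ k ∧ f (xx k) ∈ closure {z}}
  have hKmem : ∀ m, f (xx m) ∈ K m := fun m => ⟨m, le_rfl, subset_closure (Set.mem_singleton _)⟩
  have hKcpt : ∀ m, IsCompact (K m) := by
    intro m
    apply isCompact_of_finite_subcover
    intro ι U hUo hcover
    obtain ⟨i0, hi0⟩ := Set.mem_iUnion.mp (hcover (hKmem m))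
    have hpre : xx m ∈ f ⁻¹' U i0 := hi0
    obtain ⟨j, hj⟩ := hVbasis (xx m) (f ⁻¹' U i0) ((hUo i0).preimage hf) hpre
    have hgex : ∀ k : ℕ, ∃ i, m ≤ k → f (xx k) ∈ U i := by
      intro k
      by_cases hk : m ≤ k
      · obtain ⟨i, hi⟩ := Set.mem_iUnion.mp
          (hcover ⟨k, hk, subset_closure (Set.mem_singleton _)⟩)
        exact ⟨i, fun _ => hi⟩
      · exact ⟨i0, fun h => absurd h hk⟩
    choose g hg using hgex
    refine ⟨insert i0 ((Finset.range (max (m + 1) j)).image g), ?_⟩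
    rintro z ⟨k, hk, hky⟩
    by_cases hkN : k < max (m + 1) j
    · exact Set.mem_biUnion (Finset.mem_insert_of_mem
        (Finset.mem_image_of_mem g (Finset.mem_range.mpr hkN)))
        (stmt18_key hky (hUo _) (hg k hk))
    · push_neg at hkN
      have hmk : m < k := lt_of_lt_of_le (lt_of_lt_of_le (Nat.lt_succ_self m)
        (le_max_left (m + 1) j)) hkN
      have hjk : j ≤ k := le_trans (le_max_right (m + 1) j) hkN
      have h5 : xx k ∈ V (xx m) k := hxxV k m hmk
      have h6 : xx k ∈ f ⁻¹' U i0 := hj (hVanti (xx m) j k hjk h5)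
      exact Set.mem_biUnion (Finset.mem_insert_self _ _) (stmt18_key hky (hUo i0) h6)
  have hKsat : ∀ m, IsSaturatedSet (K m) := by
    intro m
    apply Set.Subset.antisymm
    · intro z hz
      exact Set.mem_sInter.mpr fun U hU => hU.2 hz
    · intro z hz
      by_contra hzK
      have hsub : K m ⊆ (closure {z})ᶜ := by
        rintro w ⟨k, hk, hky⟩ hwc
        exact hzK ⟨k, hk,
          closure_minimal (Set.singleton_subset_iff.mpr hwc) isClosed_closure hky⟩
      have hmem := Set.mem_sInter.mp hz ((closure {z})ᶜ)
        ⟨isClosed_closure.isOpen_compl, hsub⟩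
      exact hmem (subset_closure (Set.mem_singleton z))
  have hKdec : ∀ m, K (m + 1) ⊆ K m := by
    rintro m z ⟨k, hk, hky⟩
    exact ⟨k, (Nat.le_succ m).trans hk, hky⟩
  have hmain := hY K (fun m => ⟨⟨f (xx m), hKmem m⟩, hKcpt m, hKsat m⟩) hKdec
    ((closure (f '' A))ᶜ) isClosed_closure.isOpen_compl
  have hnot : ¬ (⋂ m, K m) ⊆ (closure (f '' A))ᶜ := by
    intro h
    obtain ⟨m, hm⟩ := hmain h
    exact (hm (hKmem m)) (subset_closure ⟨xx m, hxA m, rfl⟩)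
  obtain ⟨z, hzK, hzC⟩ := Set.not_subset.mp hnot
  refine ⟨z, ?_, Set.notMem_compl_iff.mp hzC⟩
  refine Set.mem_iInter.mpr fun n => ?_
  show f (a n) ∈ closure {z}
  rw [mem_closure_iff]
  intro W hWo hWa
  obtain ⟨j, hj⟩ := hVbasis (a n) (f ⁻¹' W) (hWo.preimage hf) hWa
  obtain ⟨k, hk, hky⟩ := Set.mem_iInter.mp hzK (max n j)
  have hnk : n ≤ k := le_trans (le_max_left n j) hk
  have hjk : j ≤ k := le_trans (le_max_right n j) hk
  have h5 : xx k ∈ V (a n) k := hxa k n hnk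
  have h6 : f (xx k) ∈ W := hj (hVanti (a n) j k hjk h5)
  exact ⟨z, stmt18_key hky hWo h6, Set.mem_singleton z⟩
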